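/- Let d ≥ 2 be an integer and α ∈ (1/2, 1). There exists a constant C > 0 such that for all λ ∈ (0,1] and all δ ∈ [0,1], λ ∫_{{k ∈ ℝᵈ : |k| ≤ 1}} (λ² + k₁² + δ²|k|²)^{-1} |k|^{-(2α+d-2)} dk ≥ C λ^{1-2α}, where k₁ denotes the first coordinate of k. -/

import Mathlib

open MeasureTheory

open Metric Set Filter Pointwise

lemma aux_integrableOn_rpow_norm {E : Type*} [NormedAddCommGroup E] [NormedSpace ℝ E]
    [MeasurableSpace E] [BorelSpace E] [FiniteDimensional ℝ E]
    (μ : Measure E) [μ.IsAddHaarMeasure]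
    {s : ℝ} (h0 : 0 < s) (hs : s < Module.finrank ℝ E) :
    IntegrableOn (fun x : E ↦ ‖x‖ ^ (-s)) (closedBall 0 1) μ := by
  have hmeas : Measurable fun x : E ↦ ‖x‖ ^ (-s) := by fun_prop
  refine ⟨hmeas.aestronglyMeasurable, ?_⟩
  rw [hasFiniteIntegral_iff_ofReal (Filter.Eventually.of_forall fun x ↦ by positivity)]
  rw [lintegral_eq_lintegral_meas_le _ (Filter.Eventually.of_forall fun x ↦ by positivity)
    hmeas.aemeasurable]
  set n := Module.finrank ℝ E with hn
  have hsub : ∀ t : ℝ, 0 < t → {x : E | t ≤ ‖x‖ ^ (-s)} ⊆ closedBall 0 (t ^ (-s⁻¹)) := by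
    intro t ht x hx
    simp only [mem_setOf_eq] at hx
    rcases eq_or_ne x 0 with rfl | hx0
    · simp only [norm_zero, Real.zero_rpow (neg_ne_zero.2 h0.ne')] at hx
      linarith
    · have hxpos : 0 < ‖x‖ := norm_pos_iff.2 hx0
      rw [mem_closedBall_zero_iff]
      have := Real.rpow_le_rpow_of_nonpos ht hx (neg_nonpos.2 (inv_nonneg.2 h0.le))
      rwa [← Real.rpow_mul (norm_nonneg x), neg_mul_neg, mul_inv_cancel₀ h0.ne',
        Real.rpow_one] at this
  calc ∫⁻ t in Ioi (0:ℝ), (μ.restrict (closedBall 0 1)) {x | t ≤ ‖x‖ ^ (-s)}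
      ≤ ∫⁻ t in Ioc (0:ℝ) 1 ∪ Ioi 1, (μ.restrict (closedBall 0 1)) {x | t ≤ ‖x‖ ^ (-s)} :=
        lintegral_mono_set Ioi_subset_Ioc_union_Ioi
    _ ≤ (∫⁻ t in Ioc (0:ℝ) 1, (μ.restrict (closedBall 0 1)) {x | t ≤ ‖x‖ ^ (-s)})
        + ∫⁻ t in Ioi (1:ℝ), (μ.restrict (closedBall 0 1)) {x | t ≤ ‖x‖ ^ (-s)} :=
        lintegral_union_le _ _ _
    _ < ⊤ := ENNReal.add_lt_top.2 ⟨?_, ?_⟩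
  · calc (∫⁻ t in Ioc (0:ℝ) 1, (μ.restrict (closedBall 0 1)) {x | t ≤ ‖x‖ ^ (-s)})
        ≤ ∫⁻ _ in Ioc (0:ℝ) 1, μ (closedBall (0:E) 1) := by
          refine lintegral_mono fun t ↦ ?_
          exact le_trans (measure_mono (subset_univ _)) (le_of_eq (Measure.restrict_apply_univ _))
      _ < ⊤ := by
          rw [setLIntegral_const]
          exact ENNReal.mul_lt_top measure_closedBall_lt_top (by simp [Real.volume_Ioc])
  · have hb : ∀ t ∈ Ioi (1:ℝ), (μ.restrict (closedBall 0 1)) {x | t ≤ ‖x‖ ^ (-s)}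
        ≤ ENNReal.ofReal (t ^ (-(↑n / s))) * μ (ball 0 1) := by
      intro t ht
      have ht0 : (0:ℝ) < t := lt_trans one_pos ht
      calc (μ.restrict (closedBall 0 1)) {x | t ≤ ‖x‖ ^ (-s)}
          ≤ μ {x | t ≤ ‖x‖ ^ (-s)} := Measure.restrict_le_self _
        _ ≤ μ (closedBall 0 (t ^ (-s⁻¹))) := measure_mono (hsub t ht0)
        _ = ENNReal.ofReal ((t ^ (-s⁻¹)) ^ n) * μ (ball 0 1) :=
            Measure.addHaar_closedBall μ 0 (Real.rpow_nonneg ht0.le _)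
        _ = ENNReal.ofReal (t ^ (-(↑n / s))) * μ (ball 0 1) := by
            rw [← Real.rpow_natCast (t ^ (-s⁻¹)) n, ← Real.rpow_mul ht0.le]
            ring_nf
    calc (∫⁻ t in Ioi (1:ℝ), (μ.restrict (closedBall 0 1)) {x | t ≤ ‖x‖ ^ (-s)})
        ≤ ∫⁻ t in Ioi (1:ℝ), ENNReal.ofReal (t ^ (-(↑n / s))) * μ (ball 0 1) :=
          setLIntegral_mono' measurableSet_Ioi hb
      _ = (∫⁻ t in Ioi (1:ℝ), ENNReal.ofReal (t ^ (-(↑n / s)))) * μ (ball 0 1) :=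
          lintegral_mul_const' _ _ measure_ball_lt_top.ne
      _ < ⊤ := by
          refine ENNReal.mul_lt_top ?_ measure_ball_lt_top
          refine IntegrableOn.setLIntegral_lt_top ?_
          refine integrableOn_Ioi_rpow_of_lt ?_ one_pos
          rw [neg_lt_neg_iff, lt_div_iff₀ h0, one_mul]
          exact hs


/-- Let `d ≥ 2` and `α ∈ (1/2, 1)`. There exists `C > 0` such that for all
`λ ∈ (0,1]` and `δ ∈ [0,1]`,
`λ ∫_{|k| ≤ 1} (λ² + k₁² + δ²|k|²)⁻¹ |k|^{-(2α+d-2)} dk ≥ C λ^{1-2α}`. -/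
theorem stmt10 (d : ℕ) (hd : 2 ≤ d) (α : ℝ) (hα1 : 1 / 2 < α) (hα2 : α < 1) :
    ∃ C > (0:ℝ), ∀ l ∈ Set.Ioc (0:ℝ) 1, ∀ δ ∈ Set.Icc (0:ℝ) 1,
      C * l ^ (1 - 2 * α) ≤
        l * ∫ k in {k : EuclideanSpace ℝ (Fin d) | ‖k‖ ≤ 1},
          (l ^ 2 + (k ⟨0, by omega⟩) ^ 2 + δ ^ 2 * ‖k‖ ^ 2)⁻¹ *
            ‖k‖ ^ (-(2 * α + (d : ℝ) - 2)) := by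
  have hdR : (2:ℝ) ≤ (d:ℝ) := by exact_mod_cast hd
  set s : ℝ := 2 * α + (d : ℝ) - 2 with hs_def
  have hs0 : 0 < s := by simp only [hs_def]; linarith
  have hfr : (Module.finrank ℝ (EuclideanSpace ℝ (Fin d)) : ℝ) = d := by
    rw [finrank_euclideanSpace_fin]
  have hsd : s < (Module.finrank ℝ (EuclideanSpace ℝ (Fin d)) : ℝ) := by
    rw [hfr]; simp only [hs_def]; linarith
  have hInt : IntegrableOn (fun x : EuclideanSpace ℝ (Fin d) ↦ ‖x‖ ^ (-s))
      (closedBall 0 1) volume := aux_integrableOn_rpow_norm _ hs0 (by exact_mod_cast hsd)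
  set J : ℝ := ∫ x in closedBall (0 : EuclideanSpace ℝ (Fin d)) 1, ‖x‖ ^ (-s) with hJ
  haveI : Nonempty (Fin d) := ⟨⟨0, by omega⟩⟩
  haveI : Nontrivial (EuclideanSpace ℝ (Fin d)) :=
    ⟨EuclideanSpace.single ⟨0, by omega⟩ (1:ℝ), 0, fun h => by
      have := congrArg (fun v : EuclideanSpace ℝ (Fin d) => v (⟨0, by omega⟩ : Fin d)) h
      simp [EuclideanSpace.single_apply] at this⟩
  have hJpos : 0 < J := by
    rw [hJ, setIntegral_pos_iff_support_of_nonneg_ae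
      (Filter.Eventually.of_forall fun x ↦ by positivity) hInt]
    refine lt_of_lt_of_le ?_ (measure_mono (?_ : ball (0 : EuclideanSpace ℝ (Fin d)) 1 \ {0} ⊆ _))
    · rw [measure_diff_null (measure_singleton 0)]
      exact measure_ball_pos _ _ one_pos
    · rintro x ⟨hx1, hx2⟩
      refine ⟨?_, ball_subset_closedBall hx1⟩
      simp only [Function.mem_support]
      have : (0:ℝ) < ‖x‖ := norm_pos_iff.2 (by simpa using hx2)
      positivity
  refine ⟨J / 3, by positivity, ?_⟩
  rintro l ⟨hl0, hl1⟩ δ ⟨hδ0, hδ1⟩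
  have hset : {k : EuclideanSpace ℝ (Fin d) | ‖k‖ ≤ 1}
      = closedBall (0 : EuclideanSpace ℝ (Fin d)) 1 := by
    ext k; simp [mem_closedBall, dist_zero_right]
  rw [hset]
  set f : EuclideanSpace ℝ (Fin d) → ℝ :=
    fun k ↦ (l ^ 2 + (k ⟨0, by omega⟩) ^ 2 + δ ^ 2 * ‖k‖ ^ 2)⁻¹ * ‖k‖ ^ (-s) with hf_def
  have hden_pos : ∀ k : EuclideanSpace ℝ (Fin d),
      0 < l ^ 2 + (k ⟨0, by omega⟩) ^ 2 + δ ^ 2 * ‖k‖ ^ 2 := fun k ↦ by positivity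
  have hf_nonneg : ∀ k, 0 ≤ f k := fun k ↦ by
    have := hden_pos k
    simp only [hf_def]
    positivity
  have hfInt : IntegrableOn f (closedBall 0 1) volume := by
    refine Integrable.mono' (hInt.const_mul ((l ^ 2)⁻¹)) ?_
      (Filter.Eventually.of_forall fun k ↦ ?_)
    · apply Measurable.aestronglyMeasurable
      have hm : Measurable fun k : EuclideanSpace ℝ (Fin d) ↦ k ⟨0, by omega⟩ :=
        (EuclideanSpace.proj (⟨0, by omega⟩ : Fin d)).continuous.measurable
      fun_prop
    · rw [Real.norm_of_nonneg (hf_nonneg k)]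
      simp only [hf_def]
      refine mul_le_mul_of_nonneg_right ?_ (Real.rpow_nonneg (norm_nonneg k) _)
      refine inv_anti₀ (by positivity) ?_
      nlinarith [sq_nonneg (k ⟨0, by omega⟩), sq_nonneg δ, sq_nonneg ‖k‖, sq_nonneg (δ * ‖k‖)]
  have hsmul : l • closedBall (0 : EuclideanSpace ℝ (Fin d)) 1 = closedBall 0 l := by
    rw [smul_closedBall' (ne_of_gt hl0), smul_zero, Real.norm_of_nonneg hl0.le, mul_one]
  have hscale : ∫ x in closedBall (0 : EuclideanSpace ℝ (Fin d)) l, ‖x‖ ^ (-s)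
      = l ^ ((d:ℝ) - s) * J := by
    have h := Measure.setIntegral_comp_smul_of_pos volume
      (fun x : EuclideanSpace ℝ (Fin d) ↦ ‖x‖ ^ (-s)) (closedBall 0 1) hl0
    rw [hsmul] at h
    simp only [norm_smul, Real.norm_of_nonneg hl0.le,
      Real.mul_rpow hl0.le (norm_nonneg _), integral_const_mul, smul_eq_mul, ← hJ] at h
    have hd0 : (l ^ Module.finrank ℝ (EuclideanSpace ℝ (Fin d)) : ℝ) ≠ 0 := by positivity
    have h2 : ∫ x in closedBall (0 : EuclideanSpace ℝ (Fin d)) l, ‖x‖ ^ (-s)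
        = l ^ Module.finrank ℝ (EuclideanSpace ℝ (Fin d)) * (l ^ (-s) * J) := by
      rw [h, ← mul_assoc, mul_inv_cancel₀ hd0, one_mul]
    rw [h2, ← Real.rpow_natCast l (Module.finrank ℝ (EuclideanSpace ℝ (Fin d))),
      ← mul_assoc, ← Real.rpow_add hl0, hfr, ← sub_eq_add_neg]
  have hsub : closedBall (0 : EuclideanSpace ℝ (Fin d)) l ⊆ closedBall 0 1 :=
    closedBall_subset_closedBall hl1
  have hbound : ∀ k ∈ closedBall (0 : EuclideanSpace ℝ (Fin d)) l,
      (3 * l ^ 2)⁻¹ * ‖k‖ ^ (-s) ≤ f k := by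
    intro k hk
    rw [mem_closedBall, dist_zero_right] at hk
    have hk2 : ‖k‖ ^ 2 ≤ l ^ 2 := by nlinarith [norm_nonneg k]
    have hk1 : (k ⟨0, by omega⟩) ^ 2 ≤ ‖k‖ ^ 2 := by
      have hnorm : ‖k‖ ^ 2 = ∑ i, (k i) ^ 2 := by
        rw [EuclideanSpace.norm_eq, Real.sq_sqrt (by positivity)]
        simp [Real.norm_eq_abs, sq_abs]
      rw [hnorm]
      exact Finset.single_le_sum (fun i _ ↦ sq_nonneg (k i)) (Finset.mem_univ _)
    have hδsq : δ ^ 2 ≤ 1 := by nlinarith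
    have hdd : l ^ 2 + (k ⟨0, by omega⟩) ^ 2 + δ ^ 2 * ‖k‖ ^ 2 ≤ 3 * l ^ 2 := by
      have h3 : δ ^ 2 * ‖k‖ ^ 2 ≤ 1 * l ^ 2 :=
        mul_le_mul hδsq hk2 (sq_nonneg _) zero_le_one
      linarith
    simp only [hf_def]
    exact mul_le_mul_of_nonneg_right (inv_anti₀ (by positivity) hdd)
      (Real.rpow_nonneg (norm_nonneg k) _)
  have step1 : (3 * l ^ 2)⁻¹ * (l ^ ((d:ℝ) - s) * J)
      ≤ ∫ k in closedBall (0 : EuclideanSpace ℝ (Fin d)) l, f k := by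
    rw [← hscale, ← integral_const_mul]
    exact setIntegral_mono_on
      ((hInt.mono_set hsub).const_mul _) (hfInt.mono_set hsub)
      measurableSet_closedBall hbound
  have step2 : (∫ k in closedBall (0 : EuclideanSpace ℝ (Fin d)) l, f k)
      ≤ ∫ k in closedBall (0 : EuclideanSpace ℝ (Fin d)) 1, f k :=
    setIntegral_mono_set hfInt (Filter.Eventually.of_forall fun k ↦ hf_nonneg k)
      (HasSubset.Subset.eventuallyLE hsub)
  have key : J / 3 * l ^ (1 - 2 * α) = l * ((3 * l ^ 2)⁻¹ * (l ^ ((d:ℝ) - s) * J)) := by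
    have e1 : (3 * l ^ 2)⁻¹ = 3⁻¹ * l ^ (-2 : ℝ) := by
      rw [mul_inv, ← Real.rpow_natCast l 2, ← Real.rpow_neg hl0.le]
      norm_num
    have e2 : (1 - 2 * α) = 1 + (-2) + ((d:ℝ) - s) := by simp only [hs_def]; ring
    rw [e1, e2, Real.rpow_add hl0, Real.rpow_add hl0, Real.rpow_one]
    ring
  calc J / 3 * l ^ (1 - 2 * α)
      = l * ((3 * l ^ 2)⁻¹ * (l ^ ((d:ℝ) - s) * J)) := key
    _ ≤ l * ∫ k in closedBall (0 : EuclideanSpace ℝ (Fin d)) l, f k := by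
        exact mul_le_mul_of_nonneg_left step1 hl0.le
    _ ≤ l * ∫ k in closedBall (0 : EuclideanSpace ℝ (Fin d)) 1, f k := by
        exact mul_le_mul_of_nonneg_left step2 hl0.le
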